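/- The set of points of the complex projective plane ℙ²(ℂ) (nonzero vectors (x, y, z) ∈ ℂ³ up to nonzero scalar) satisfying xyz = 0 and x³ + y³ + z³ = 0 consists of exactly 9 points. -/

import Mathlib

open scoped LinearAlgebra.Projectivization
open Projectivization

noncomputable def ww : ℂ := ⟨-1/2, Real.sqrt 3 / 2⟩

lemma ww_im : ww.im = Real.sqrt 3 / 2 := rfl

lemma sqrt3_pos : (0:ℝ) < Real.sqrt 3 := Real.sqrt_pos.2 (by norm_num)

lemma ww_sum : ww ^ 2 + ww + 1 = 0 := by
  have h3 : Real.sqrt 3 * Real.sqrt 3 = 3 := Real.mul_self_sqrt (by norm_num)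
  apply Complex.ext <;>
    simp [ww, pow_two, Complex.mul_re, Complex.mul_im, Complex.add_re, Complex.add_im] <;>
    nlinarith [h3]

lemma ww_cube : ww ^ 3 = 1 := by linear_combination (ww - 1) * ww_sum

lemma ww_ne_one : ww ≠ 1 := by
  intro h
  have := congrArg Complex.im h
  rw [ww_im] at this
  simp at this

lemma ww_sq_ne_one : ww ^ 2 ≠ 1 := by
  intro h
  have h2 : ww ^ 2 = -ww - 1 := by linear_combination ww_sum
  rw [h2] at h
  have := congrArg Complex.im h
  simp [ww_im] at this

lemma ww_ne_sq : ww ≠ ww ^ 2 := by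
  intro h
  have h2 : ww ^ 2 = -ww - 1 := by linear_combination ww_sum
  rw [h2] at h
  have := congrArg Complex.im h
  simp [ww_im] at this
  nlinarith [sqrt3_pos]

lemma ww_ne_zero : ww ≠ 0 := by
  intro h
  have := congrArg Complex.im h
  rw [ww_im] at this
  simp at this

lemma cube_eq_neg_one {a : ℂ} : a ^ 3 = -1 ↔ a = -1 ∨ a = -ww ∨ a = -ww ^ 2 := by
  constructor
  · intro h
    have key : (a + 1) * (a + ww) * (a + ww ^ 2) = 0 := by
      linear_combination h + (a^2 + a) * ww_sum + (a + 1) * ww_cube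
    rcases mul_eq_zero.1 key with h' | h'
    · rcases mul_eq_zero.1 h' with h'' | h''
      · left; linear_combination h''
      · right; left; linear_combination h''
    · right; right; linear_combination h'
  · rintro (rfl | rfl | rfl)
    · norm_num
    · linear_combination -ww_cube
    · linear_combination (-ww^3 - 1) * ww_cube

noncomputable def ptA (x : ℂ) : ℙ ℂ (Fin 3 → ℂ) :=
  Projectivization.mk ℂ ![1, x, 0] (by intro h; simpa using congrFun h 0)

noncomputable def ptB (x : ℂ) : ℙ ℂ (Fin 3 → ℂ) :=
  Projectivization.mk ℂ ![1, 0, x] (by intro h; simpa using congrFun h 0)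

noncomputable def ptC (x : ℂ) : ℙ ℂ (Fin 3 → ℂ) :=
  Projectivization.mk ℂ ![0, 1, x] (by intro h; simpa using congrFun h 1)

lemma ne_AA {x y : ℂ} (h : x ≠ y) : ptA x ≠ ptA y := by
  intro heq
  rw [ptA, ptA, Projectivization.mk_eq_mk_iff'] at heq
  obtain ⟨a, ha⟩ := heq
  have e0 := congrFun ha 0
  have e1 := congrFun ha 1
  simp at e0 e1
  exact h (by rw [← e1, e0, one_mul])

lemma ne_BB {x y : ℂ} (h : x ≠ y) : ptB x ≠ ptB y := by
  intro heq
  rw [ptB, ptB, Projectivization.mk_eq_mk_iff'] at heq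
  obtain ⟨a, ha⟩ := heq
  have e0 := congrFun ha 0
  have e2 := congrFun ha 2
  simp at e0 e2
  exact h (by rw [← e2, e0, one_mul])

lemma ne_CC {x y : ℂ} (h : x ≠ y) : ptC x ≠ ptC y := by
  intro heq
  rw [ptC, ptC, Projectivization.mk_eq_mk_iff'] at heq
  obtain ⟨a, ha⟩ := heq
  have e1 := congrFun ha 1
  have e2 := congrFun ha 2
  simp at e1 e2
  exact h (by rw [← e2, e1, one_mul])

lemma ne_AB {x y : ℂ} (hx : x ≠ 0) : ptA x ≠ ptB y := by
  intro heq
  rw [ptA, ptB, Projectivization.mk_eq_mk_iff'] at heq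
  obtain ⟨a, ha⟩ := heq
  have e1 := congrFun ha 1
  simp at e1
  exact hx e1.symm

lemma ne_AC {x y : ℂ} : ptA x ≠ ptC y := by
  intro heq
  rw [ptA, ptC, Projectivization.mk_eq_mk_iff'] at heq
  obtain ⟨a, ha⟩ := heq
  have e0 := congrFun ha 0
  simp at e0

lemma ne_BC {x y : ℂ} : ptB x ≠ ptC y := by
  intro heq
  rw [ptB, ptC, Projectivization.mk_eq_mk_iff'] at heq
  obtain ⟨a, ha⟩ := heq
  have e0 := congrFun ha 0
  simp at e0

lemma caseA {v : Fin 3 → ℂ} {c : ℂ} (hv : v ≠ 0) (h0 : v 0 ≠ 0)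
    (hc : v 1 = c * v 0) (h2 : v 2 = 0) : Projectivization.mk ℂ v hv = ptA c := by
  rw [ptA, Projectivization.mk_eq_mk_iff']
  exact ⟨v 0, by funext i; fin_cases i <;> simp [hc, h2] <;> ring⟩

lemma caseB {v : Fin 3 → ℂ} {c : ℂ} (hv : v ≠ 0) (h0 : v 0 ≠ 0)
    (h1 : v 1 = 0) (hc : v 2 = c * v 0) : Projectivization.mk ℂ v hv = ptB c := by
  rw [ptB, Projectivization.mk_eq_mk_iff']
  exact ⟨v 0, by funext i; fin_cases i <;> simp [h1, hc] <;> ring⟩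

lemma caseC {v : Fin 3 → ℂ} {c : ℂ} (hv : v ≠ 0) (h0 : v 0 = 0)
    (h1 : v 1 ≠ 0) (hc : v 2 = c * v 1) : Projectivization.mk ℂ v hv = ptC c := by
  rw [ptC, Projectivization.mk_eq_mk_iff']
  exact ⟨v 1, by funext i; fin_cases i <;> simp [h0, hc] <;> ring⟩

lemma cube_pair {a b : ℂ} (hb : b ≠ 0) (h : a ^ 3 + b ^ 3 = 0) :
    a = -1 * b ∨ a = -ww * b ∨ a = -ww ^ 2 * b := by
  have h' : (a / b) ^ 3 = -1 := by
    rw [div_pow, div_eq_iff (pow_ne_zero 3 hb)]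
    linear_combination h
  rcases cube_eq_neg_one.1 h' with h'' | h'' | h'' <;>
      rw [div_eq_iff hb] at h''
  · left; linear_combination h''
  · right; left; linear_combination h''
  · right; right; linear_combination h''

lemma mk_cond {w : Fin 3 → ℂ} (hw : w ≠ 0) (h1 : w 0 * w 1 * w 2 = 0)
    (h2 : w 0 ^ 3 + w 1 ^ 3 + w 2 ^ 3 = 0) :
    (Projectivization.mk ℂ w hw).rep 0 * (Projectivization.mk ℂ w hw).rep 1 *
        (Projectivization.mk ℂ w hw).rep 2 = 0 ∧
    (Projectivization.mk ℂ w hw).rep 0 ^ 3 + (Projectivization.mk ℂ w hw).rep 1 ^ 3 +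
        (Projectivization.mk ℂ w hw).rep 2 ^ 3 = 0 := by
  obtain ⟨a, ha⟩ := Projectivization.exists_smul_eq_mk_rep ℂ w hw
  have e : ∀ i, (Projectivization.mk ℂ w hw).rep i = (a : ℂ) * w i := fun i => by
    rw [← ha]; rfl
  rw [e 0, e 1, e 2]
  constructor
  · linear_combination ((a : ℂ)) ^ 3 * h1
  · linear_combination ((a : ℂ)) ^ 3 * h2

theorem nine_points_in_linear_section :
    {P : ℙ ℂ (Fin 3 → ℂ) |
        P.rep 0 * P.rep 1 * P.rep 2 = 0 ∧
        P.rep 0 ^ 3 + P.rep 1 ^ 3 + P.rep 2 ^ 3 = 0}.ncard = 9 := by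
  have hd12 : (-1 : ℂ) ≠ -ww := fun h => ww_ne_one (neg_inj.1 h).symm
  have hd13 : (-1 : ℂ) ≠ -ww ^ 2 := fun h => ww_sq_ne_one (neg_inj.1 h).symm
  have hd23 : (-ww : ℂ) ≠ -ww ^ 2 := fun h => ww_ne_sq (neg_inj.1 h)
  have hn1 : (-1 : ℂ) ≠ 0 := by norm_num
  have hn2 : (-ww : ℂ) ≠ 0 := neg_ne_zero.2 ww_ne_zero
  have hn3 : (-ww ^ 2 : ℂ) ≠ 0 := neg_ne_zero.2 (pow_ne_zero 2 ww_ne_zero)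
  have hc2 : (-ww) ^ 3 = -1 := cube_eq_neg_one.2 (Or.inr (Or.inl rfl))
  have hc3 : (-ww ^ 2) ^ 3 = -1 := cube_eq_neg_one.2 (Or.inr (Or.inr rfl))
  have hSet : {P : ℙ ℂ (Fin 3 → ℂ) |
        P.rep 0 * P.rep 1 * P.rep 2 = 0 ∧
        P.rep 0 ^ 3 + P.rep 1 ^ 3 + P.rep 2 ^ 3 = 0} =
      {ptA (-1), ptA (-ww), ptA (-ww ^ 2), ptB (-1), ptB (-ww), ptB (-ww ^ 2),
       ptC (-1), ptC (-ww), ptC (-ww ^ 2)} := by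
    ext P
    simp only [Set.mem_setOf_eq, Set.mem_insert_iff, Set.mem_singleton_iff]
    constructor
    · rintro ⟨hm, hc⟩
      rw [← Projectivization.mk_rep P]
      by_cases h0 : P.rep 0 = 0
      · have h1 : P.rep 1 ≠ 0 := by
          intro h1
          have h2 : P.rep 2 = 0 := by
            have h3 : P.rep 2 ^ 3 = 0 := by
              linear_combination hc - (P.rep 0) ^ 2 * h0 - (P.rep 1) ^ 2 * h1
            exact pow_eq_zero_iff (by norm_num) |>.1 h3
          exact P.rep_nonzero (funext fun i => by fin_cases i <;> assumption)
        have hpair : P.rep 2 ^ 3 + P.rep 1 ^ 3 = 0 := by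
          linear_combination hc - (P.rep 0) ^ 2 * h0
        rcases cube_pair h1 hpair with h | h | h
        · exact Or.inr (Or.inr (Or.inr (Or.inr (Or.inr (Or.inr (Or.inl
            (caseC P.rep_nonzero h0 h1 (by linear_combination h))))))))
        · exact Or.inr (Or.inr (Or.inr (Or.inr (Or.inr (Or.inr (Or.inr (Or.inl
            (caseC P.rep_nonzero h0 h1 (by linear_combination h)))))))))
        · exact Or.inr (Or.inr (Or.inr (Or.inr (Or.inr (Or.inr (Or.inr (Or.inr
            (caseC P.rep_nonzero h0 h1 (by linear_combination h)))))))))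
      · by_cases h1 : P.rep 1 = 0
        · have hpair : P.rep 2 ^ 3 + P.rep 0 ^ 3 = 0 := by
            linear_combination hc - (P.rep 1) ^ 2 * h1
          rcases cube_pair h0 hpair with h | h | h
          · exact Or.inr (Or.inr (Or.inr (Or.inl
              (caseB P.rep_nonzero h0 h1 (by linear_combination h)))))
          · exact Or.inr (Or.inr (Or.inr (Or.inr (Or.inl
              (caseB P.rep_nonzero h0 h1 (by linear_combination h))))))
          · exact Or.inr (Or.inr (Or.inr (Or.inr (Or.inr (Or.inl
              (caseB P.rep_nonzero h0 h1 (by linear_combination h)))))))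
        · have h2 : P.rep 2 = 0 := by
            rcases mul_eq_zero.1 hm with h | h
            · rcases mul_eq_zero.1 h with h | h
              · exact absurd h h0
              · exact absurd h h1
            · exact h
          have hpair : P.rep 1 ^ 3 + P.rep 0 ^ 3 = 0 := by
            linear_combination hc - (P.rep 2) ^ 2 * h2
          rcases cube_pair h0 hpair with h | h | h
          · exact Or.inl (caseA P.rep_nonzero h0 (by linear_combination h) h2)
          · exact Or.inr (Or.inl (caseA P.rep_nonzero h0 (by linear_combination h) h2))
          · exact Or.inr (Or.inr (Or.inl
              (caseA P.rep_nonzero h0 (by linear_combination h) h2)))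
    · rintro (rfl | rfl | rfl | rfl | rfl | rfl | rfl | rfl | rfl) <;>
        simp only [ptA, ptB, ptC] <;>
        refine mk_cond _ (by norm_num [Matrix.cons_val_two]) (by norm_num [Matrix.cons_val_two, hc2, hc3]) <;> skip
  rw [hSet]
  have f9 : ({ptC (-ww ^ 2)} : Set (ℙ ℂ (Fin 3 → ℂ))).Finite := Set.finite_singleton _
  have f8 := f9.insert (ptC (-ww))
  have f7 := f8.insert (ptC (-1))
  have f6 := f7.insert (ptB (-ww ^ 2))
  have f5 := f6.insert (ptB (-ww))
  have f4 := f5.insert (ptB (-1))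
  have f3 := f4.insert (ptA (-ww ^ 2))
  have f2 := f3.insert (ptA (-ww))
  have nm8 : ptC (-ww) ∉ ({ptC (-ww ^ 2)} : Set (ℙ ℂ (Fin 3 → ℂ))) := by
    simpa using ne_CC hd23
  have nm7 : ptC (-1) ∉ ({ptC (-ww), ptC (-ww ^ 2)} : Set (ℙ ℂ (Fin 3 → ℂ))) := by
    simp only [Set.mem_insert_iff, Set.mem_singleton_iff, not_or]
    exact ⟨ne_CC hd12, ne_CC hd13⟩
  have nm6 : ptB (-ww ^ 2) ∉ ({ptC (-1), ptC (-ww), ptC (-ww ^ 2)} :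
      Set (ℙ ℂ (Fin 3 → ℂ))) := by
    simp only [Set.mem_insert_iff, Set.mem_singleton_iff, not_or]
    exact ⟨ne_BC, ne_BC, ne_BC⟩
  have nm5 : ptB (-ww) ∉ ({ptB (-ww ^ 2), ptC (-1), ptC (-ww), ptC (-ww ^ 2)} :
      Set (ℙ ℂ (Fin 3 → ℂ))) := by
    simp only [Set.mem_insert_iff, Set.mem_singleton_iff, not_or]
    exact ⟨ne_BB hd23, ne_BC, ne_BC, ne_BC⟩
  have nm4 : ptB (-1) ∉ ({ptB (-ww), ptB (-ww ^ 2), ptC (-1), ptC (-ww), ptC (-ww ^ 2)} :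
      Set (ℙ ℂ (Fin 3 → ℂ))) := by
    simp only [Set.mem_insert_iff, Set.mem_singleton_iff, not_or]
    exact ⟨ne_BB hd12, ne_BB hd13, ne_BC, ne_BC, ne_BC⟩
  have nm3 : ptA (-ww ^ 2) ∉ ({ptB (-1), ptB (-ww), ptB (-ww ^ 2), ptC (-1), ptC (-ww),
      ptC (-ww ^ 2)} : Set (ℙ ℂ (Fin 3 → ℂ))) := by
    simp only [Set.mem_insert_iff, Set.mem_singleton_iff, not_or]
    exact ⟨ne_AB hn3, ne_AB hn3, ne_AB hn3, ne_AC, ne_AC, ne_AC⟩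
  have nm2 : ptA (-ww) ∉ ({ptA (-ww ^ 2), ptB (-1), ptB (-ww), ptB (-ww ^ 2), ptC (-1),
      ptC (-ww), ptC (-ww ^ 2)} : Set (ℙ ℂ (Fin 3 → ℂ))) := by
    simp only [Set.mem_insert_iff, Set.mem_singleton_iff, not_or]
    exact ⟨ne_AA hd23, ne_AB hn2, ne_AB hn2, ne_AB hn2, ne_AC, ne_AC, ne_AC⟩
  have nm1 : ptA (-1) ∉ ({ptA (-ww), ptA (-ww ^ 2), ptB (-1), ptB (-ww), ptB (-ww ^ 2),
      ptC (-1), ptC (-ww), ptC (-ww ^ 2)} : Set (ℙ ℂ (Fin 3 → ℂ))) := by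
    simp only [Set.mem_insert_iff, Set.mem_singleton_iff, not_or]
    exact ⟨ne_AA hd12, ne_AA hd13, ne_AB hn1, ne_AB hn1, ne_AB hn1, ne_AC, ne_AC, ne_AC⟩
  rw [Set.ncard_insert_of_notMem nm1 f2, Set.ncard_insert_of_notMem nm2 f3,
    Set.ncard_insert_of_notMem nm3 f4, Set.ncard_insert_of_notMem nm4 f5,
    Set.ncard_insert_of_notMem nm5 f6, Set.ncard_insert_of_notMem nm6 f7,
    Set.ncard_insert_of_notMem nm7 f8, Set.ncard_insert_of_notMem nm8 f9,
    Set.ncard_singleton]
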